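/- Let A ∈ ℤ^{m×n}, b ∈ ℤ^m and c ∈ ℤ^n, and suppose the set S = {x ∈ ℤ^n : Ax = b, x ≥ 0} is nonempty. Then the set of objective values {cᵀx : x ∈ S} is unbounded above if and only if there exists y ∈ ℤ^n with y ≥ 0 componentwise, Ay = 0, and cᵀy > 0. -/

import Mathlib

open Matrix Finset

/-- Characterization of unboundedness: if `{x ∈ ℤⁿ : Ax = b, x ≥ 0}` is nonempty, then
the objective values `{cᵀx}` are unbounded above iff there is `y ≥ 0` with `Ay = 0`
and `cᵀy > 0`. -/
theorem unbounded_iff_homogeneous {m n : ℕ} (A : Matrix (Fin m) (Fin n) ℤ)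
    (b : Fin m → ℤ) (c : Fin n → ℤ)
    (hfeas : ∃ x : Fin n → ℤ, 0 ≤ x ∧ A.mulVec x = b) :
    ¬ BddAbove {v : ℤ | ∃ x : Fin n → ℤ, 0 ≤ x ∧ A.mulVec x = b ∧ c ⬝ᵥ x = v}
    ↔ ∃ y : Fin n → ℤ, 0 ≤ y ∧ A.mulVec y = 0 ∧ 0 < c ⬝ᵥ y := by
  constructor
  · intro hub
    -- For every bound z there is a feasible point with value > z
    have key : ∀ z : ℤ, ∃ x : Fin n → ℤ, (0 ≤ x ∧ A.mulVec x = b) ∧ z < c ⬝ᵥ x := by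
      intro z
      by_contra h
      push_neg at h
      exact hub ⟨z, fun v hv => by
        obtain ⟨x, hx0, hxA, hxc⟩ := hv
        exact hxc ▸ h x ⟨hx0, hxA⟩⟩
    choose F hF using key
    obtain ⟨x0, hx0⟩ := hfeas
    -- sequence of feasible points with strictly increasing objective
    let f : ℕ → (Fin n → ℤ) := fun k => Nat.rec x0 (fun _ xk => F (c ⬝ᵥ xk)) k
    have hfk : ∀ k, 0 ≤ f k ∧ A.mulVec (f k) = b := by
      intro k
      induction k with
      | zero => exact hx0
      | succ k _ => exact (hF (c ⬝ᵥ f k)).1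
    have hmono : StrictMono (fun k => c ⬝ᵥ f k) :=
      strictMono_nat_of_lt_succ fun k => (hF (c ⬝ᵥ f k)).2
    -- Dickson's lemma on the natification
    let g : ℕ → (Fin n → ℕ) := fun k i => (f k i).toNat
    have hg : ∀ k, (fun i => ((g k i : ℤ))) = f k := by
      intro k; funext i; exact Int.toNat_of_nonneg ((hfk k).1 i)
    obtain ⟨i, j, hij, hle⟩ :=
      (Set.isPWO_of_wellQuasiOrderedLE (Set.univ : Set (Fin n → ℕ))).exists_lt (f := g) (fun _ => Set.mem_univ _)
    have hle' : f i ≤ f j := by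
      intro t
      rw [← hg i, ← hg j]
      simpa using (Nat.cast_le (α := ℤ)).mpr (hle t)
    refine ⟨f j - f i, ?_, ?_, ?_⟩
    · intro t; simpa [Pi.sub_apply] using sub_nonneg.mpr (hle' t)
    · rw [A.mulVec_sub, (hfk j).2, (hfk i).2, sub_self]
    · rw [dotProduct_sub]
      exact sub_pos.mpr (hmono hij)
  · rintro ⟨y, hy0, hyA, hyc⟩ hub
    obtain ⟨x0, hx00, hx0A⟩ := hfeas
    obtain ⟨M, hM⟩ := hub
    -- x0 + k • y is feasible with value c⬝x0 + k * c⬝y, unbounded in k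
    have hmem : ∀ k : ℕ, c ⬝ᵥ x0 + k * (c ⬝ᵥ y) ∈
        {v : ℤ | ∃ x : Fin n → ℤ, 0 ≤ x ∧ A.mulVec x = b ∧ c ⬝ᵥ x = v} := by
      intro k
      refine ⟨x0 + (k : ℤ) • y, ?_, ?_, ?_⟩
      · intro t
        have : (0:ℤ) ≤ (k : ℤ) * y t := mul_nonneg (by positivity) (hy0 t)
        simpa [Pi.add_apply, Pi.smul_apply] using add_nonneg (hx00 t) this
      · rw [A.mulVec_add, hx0A, A.mulVec_smul, hyA, smul_zero, add_zero]
      · rw [dotProduct_add, dotProduct_smul, smul_eq_mul]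
    -- pick k large
    obtain ⟨k, hk⟩ := exists_nat_gt (M - c ⬝ᵥ x0)
    have h1 : c ⬝ᵥ x0 + k * (c ⬝ᵥ y) ≤ M := hM (hmem k)
    have h2 : (k:ℤ) ≤ k * (c ⬝ᵥ y) := le_mul_of_one_le_right (by positivity) hyc
    linarith
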